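/- A function on V that is locally convex (every point has a convex open neighborhood on which the function is convex) is convex on V. -/

import Mathlib

/-- A locally convex function on `ℝ` is convex: key one-dimensional lemma. -/
lemma locConvex_real {g : ℝ → ℝ}
    (hloc : ∀ t : ℝ, ∃ U : Set ℝ, IsOpen U ∧ t ∈ U ∧ Convex ℝ U ∧ ConvexOn ℝ U g) :
    ConvexOn ℝ Set.univ g := by
  -- First: for any x < y, g lies below the chord on [x, y].
  have key : ∀ x y : ℝ, x < y → ∀ t ∈ Set.Icc x y,
      g t - (g x + (g y - g x) / (y - x) * (t - x)) ≤ 0 := by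
    intro x y hxy' t ht
    set k : ℝ := (g y - g x) / (y - x) with hk
    set ℓ : ℝ → ℝ := fun s => g x + k * (s - x) with hℓ
    set h : ℝ → ℝ := fun s => g s - ℓ s with hh
    show h t ≤ 0
    have hyx : y - x ≠ 0 := sub_ne_zero.mpr hxy'.ne'
    -- h is locally convex
    have hloch : ∀ s : ℝ, ∃ U : Set ℝ, IsOpen U ∧ s ∈ U ∧ Convex ℝ U ∧ ConvexOn ℝ U h := by
      intro s
      obtain ⟨U, hU, hsU, hUc, hUg⟩ := hloc s
      refine ⟨U, hU, hsU, hUc, ?_⟩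
      have haff : ConcaveOn ℝ U ℓ := by
        refine ⟨hUc, fun p _ q _ a b ha hb hab => ?_⟩
        have hba : b = 1 - a := by linarith
        subst hba
        simp only [hℓ, smul_eq_mul]
        ring_nf
        exact le_refl _
      exact hUg.sub haff
    -- h is continuous on ℝ
    have hcont : Continuous h := by
      rw [continuous_iff_continuousAt]
      intro s
      obtain ⟨U, hU, hsU, hUc, hUh⟩ := hloch s
      exact (hUh.continuousOn hU).continuousAt (hU.mem_nhds hsU)
    have hx0 : h x = 0 := by simp [hh, hℓ]
    have hky : k * (y - x) = g y - g x := div_mul_cancel₀ _ hyx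
    have hy0 : h y = 0 := by
      simp only [hh, hℓ]
      linarith
    -- maximum of h on [x, y]
    obtain ⟨m, hm, hmax⟩ := isCompact_Icc.exists_isMaxOn (Set.nonempty_Icc.2 hxy'.le)
      (hcont.continuousOn (s := Set.Icc x y))
    set M := h m with hM
    by_cases hMpos : M ≤ 0
    · exact le_trans (hmax ht) hMpos
    push_neg at hMpos
    exfalso
    -- set of points attaining the max; take its sup
    set S : Set ℝ := {s ∈ Set.Icc x y | h s = M} with hS
    have hSne : S.Nonempty := ⟨m, hm, rfl⟩
    have hSbdd : BddAbove S := ⟨y, fun s hs => hs.1.2⟩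
    have hSclosed : IsClosed S := by
      have : S = Set.Icc x y ∩ h ⁻¹' {M} := by
        ext s; simp [hS, Set.mem_sep_iff, Set.mem_inter_iff]
      rw [this]
      exact isClosed_Icc.inter (isClosed_eq hcont continuous_const)
    set c := sSup S with hc
    have hcS : c ∈ S := hSclosed.csSup_mem hSne hSbdd
    have hcIcc : c ∈ Set.Icc x y := hcS.1
    have hcM : h c = M := hcS.2
    -- c ≠ x and c ≠ y since h x = h y = 0 < M
    have hcx : x < c := by
      rcases eq_or_lt_of_le hcIcc.1 with heq | hlt
      · exfalso; rw [← heq, hx0] at hcM; linarith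
      · exact hlt
    have hcy : c < y := by
      rcases eq_or_lt_of_le hcIcc.2 with heq | hlt
      · exfalso; rw [heq, hy0] at hcM; linarith
      · exact hlt
    -- local convexity at c gives a point to the right attaining M
    obtain ⟨U, hU, hcU, hUc, hUh⟩ := hloch c
    obtain ⟨ε, hε, hball⟩ := Metric.isOpen_iff.1 hU c hcU
    set s : ℝ := max (c - ε / 2) ((x + c) / 2) with hsdef
    set t' : ℝ := min (c + ε / 2) ((c + y) / 2) with htdef
    have hs_lt : s < c := by
      apply max_lt <;> linarith
    have ht_gt : c < t' := by
      apply lt_min <;> linarith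
    have hs_mem : s ∈ U := hball (by
      simp only [Metric.mem_ball, Real.dist_eq, abs_lt]
      constructor
      · have : c - ε / 2 ≤ s := le_max_left _ _
        linarith
      · linarith)
    have ht_mem : t' ∈ U := hball (by
      simp only [Metric.mem_ball, Real.dist_eq, abs_lt]
      constructor
      · linarith
      · have : t' ≤ c + ε / 2 := min_le_left _ _
        linarith)
    have hs_Icc : s ∈ Set.Icc x y := by
      constructor
      · have : (x + c) / 2 ≤ s := le_max_right _ _
        linarith
      · linarith
    have ht_Icc : t' ∈ Set.Icc x y := by
      constructor
      · linarith [hcIcc.1]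
      · have : t' ≤ (c + y) / 2 := min_le_right _ _
        linarith
    -- write c as a convex combination of s and t'
    set θ : ℝ := (t' - c) / (t' - s) with hθ
    have hts : (0:ℝ) < t' - s := by linarith
    have hθ0 : 0 < θ := div_pos (by linarith) hts
    have hθ1 : θ < 1 := by
      rw [hθ, div_lt_one hts]; linarith
    have hcomb : θ • s + (1 - θ) • t' = c := by
      simp only [smul_eq_mul]
      linear_combination (-1 : ℝ) * (div_mul_cancel₀ (t' - c) hts.ne' : θ * (t' - s) = t' - c)
    have hconv := hUh.2 hs_mem ht_mem hθ0.le (by linarith : (0:ℝ) ≤ 1 - θ) (by ring)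
    rw [hcomb] at hconv
    simp only [smul_eq_mul] at hconv
    -- h s ≤ M, so h t' ≥ M, hence h t' = M, contradicting c = sSup S
    have hsM : h s ≤ M := hmax hs_Icc
    have htM : h t' ≤ M := hmax ht_Icc
    have ht'M : h t' = M := by nlinarith
    have : t' ≤ c := le_csSup hSbdd ⟨ht_Icc, ht'M⟩
    linarith
  -- derive convexity from the chord bound
  refine ⟨convex_univ, fun x _ y _ a b ha hb hab => ?_⟩
  simp only [smul_eq_mul]
  rcases lt_trichotomy x y with hlt | heq | hlt
  · have h1 : a * x + b * y - x = b * (y - x) := by linear_combination x * hab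
    have h2 : y - (a * x + b * y) = a * (y - x) := by linear_combination (-y) * hab
    have ht : a * x + b * y ∈ Set.Icc x y := by
      constructor
      · nlinarith [mul_nonneg hb (sub_nonneg.2 hlt.le)]
      · nlinarith [mul_nonneg ha (sub_nonneg.2 hlt.le)]
    have := key x y hlt _ ht
    have hyx : y - x ≠ 0 := sub_ne_zero.mpr hlt.ne'
    rw [h1] at this
    have hkk : (g y - g x) / (y - x) * (b * (y - x)) = b * (g y - g x) := by
      field_simp
    rw [hkk] at this
    have heq : g x + b * (g y - g x) = a * g x + b * g y := by
      linear_combination (-(g x)) * hab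
    linarith
  · subst heq
    have : a * x + b * x = x := by linear_combination x * hab
    rw [this]
    have heq : a * g x + b * g x = g x := by linear_combination (g x) * hab
    linarith
  · have h1 : a * x + b * y - y = a * (x - y) := by linear_combination y * hab
    have h2 : x - (a * x + b * y) = b * (x - y) := by linear_combination (-x) * hab
    have ht : a * x + b * y ∈ Set.Icc y x := by
      constructor
      · nlinarith [mul_nonneg ha (sub_nonneg.2 hlt.le)]
      · nlinarith [mul_nonneg hb (sub_nonneg.2 hlt.le)]
    have := key y x hlt _ ht
    have hxy : x - y ≠ 0 := sub_ne_zero.mpr hlt.ne'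
    rw [h1] at this
    have hkk : (g x - g y) / (x - y) * (a * (x - y)) = a * (g x - g y) := by
      field_simp
    rw [hkk] at this
    have heq : g y + a * (g x - g y) = a * g x + b * g y := by
      linear_combination (-(g y)) * hab
    linarith

/-- A locally convex function (every point has a convex open neighborhood on which the
function is convex) on a real normed vector space is convex. -/
theorem stmt12 {V : Type*} [NormedAddCommGroup V] [NormedSpace ℝ V] (f : V → ℝ)
    (hloc : ∀ x : V, ∃ U : Set V, IsOpen U ∧ x ∈ U ∧ Convex ℝ U ∧ ConvexOn ℝ U f) :
    ConvexOn ℝ Set.univ f := by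
  refine ⟨convex_univ, fun x _ y _ a b ha hb hab => ?_⟩
  -- restrict to the line through x and y
  set L : ℝ →ᵃ[ℝ] V := AffineMap.lineMap x y with hL
  have hLcont : Continuous L := AffineMap.lineMap_continuous
  have hlocg : ∀ t : ℝ, ∃ U : Set ℝ, IsOpen U ∧ t ∈ U ∧ Convex ℝ U ∧ ConvexOn ℝ U (f ∘ L) := by
    intro t
    obtain ⟨U, hU, hmem, hUc, hUf⟩ := hloc (L t)
    exact ⟨L ⁻¹' U, hU.preimage hLcont, hmem, hUc.affine_preimage L,
      hUf.comp_affineMap L⟩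
  have hg := locConvex_real hlocg
  have h := hg.2 (Set.mem_univ (0:ℝ)) (Set.mem_univ (1:ℝ)) ha hb hab
  have h0 : L 0 = x := AffineMap.lineMap_apply_zero x y
  have h1 : L 1 = y := AffineMap.lineMap_apply_one x y
  have hLb : L b = a • x + b • y := by
    rw [hL, AffineMap.lineMap_apply_module, show (1:ℝ) - b = a by linarith]
  simpa [hLb, h0, h1] using h
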